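/- Let j ≥ k ≥ t+2 and 0 ≤ s ≤ k-t-2, and let L(j,t) = (t+1) + (j-t+1)·log₂((t+1)(j-t+1)). If n ≥ 2·L(j,t) - t - 2, then S(n-t-s, k-t-s) > (t+1)²·(j-t+1)²·S(n-t-s-1, k-t-s-1). -/

import Mathlib

/-- Stirling number of the second kind. -/
def stirling : ℕ → ℕ → ℕ
  | 0, 0 => 1
  | 0, _ + 1 => 0
  | _ + 1, 0 => 0
  | n + 1, k + 1 => stirling n k + (k + 1) * stirling n (k + 1)

/-- `L(k,t) = (t+1) + (k-t+1)·log₂((t+1)(k-t+1))`. -/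
noncomputable def Lfun (k t : ℕ) : ℝ :=
  ((t : ℝ) + 1) + ((k : ℝ) - t + 1) * Real.logb 2 (((t : ℝ) + 1) * ((k : ℝ) - t + 1))

set_option maxHeartbeats 2000000

lemma alt_nonneg : ∀ (n : ℕ) (c : ℕ → ℤ), (∀ i, 0 ≤ c i) → (∀ i, c (i+1) ≤ c i) →
    0 ≤ ∑ i ∈ Finset.range n, (-1)^i * c i := by
  intro n
  induction n using Nat.strong_induction_on with
  | _ n ih =>
    match n with
    | 0 => intro c h0 h1; simp
    | 1 => intro c h0 h1; simpa using h0 0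
    | (n+2) =>
      intro c h0 h1
      rw [Finset.sum_range_succ', Finset.sum_range_succ']
      have hI := ih n (by omega) (fun i => c (i+2)) (fun i => h0 _) (fun i => h1 _)
      have he : ∑ i ∈ Finset.range n, (-1:ℤ)^(i+1+1) * c (i+1+1)
          = ∑ i ∈ Finset.range n, (-1:ℤ)^i * c (i+2) := by
        refine Finset.sum_congr rfl fun i _ => ?_
        rw [pow_succ, pow_succ]; ring_nf
      rw [he]
      have h01 : c 1 ≤ c 0 := h1 0
      have h00 : 0 ≤ c 0 := h0 0
      simp only [pow_succ, pow_zero]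
      linarith [hI]

def Aform (m r : ℕ) : ℤ := ∑ i ∈ Finset.range (r+1), (-1)^i * (r.choose i) * ((r:ℤ) - i)^m

lemma Aform_succ (m r : ℕ) : Aform (m+1) (r+1) = ((r:ℤ)+1) * (Aform m r + Aform m (r+1)) := by
  have key : ∀ i ∈ Finset.range (r+2), (-1:ℤ)^i * (((r+1).choose i : ℕ) : ℤ) * ((((r+1):ℕ):ℤ) - i)^(m+1)
      = ((r:ℤ)+1) * ((-1)^i * (r.choose i) * ((((r+1):ℕ):ℤ) - i)^m) := by
    intro i hi
    have hi' : i ≤ r + 1 := by have := Finset.mem_range.mp hi; omega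
    have h1 : (((r+1).choose i : ℕ) : ℤ) * ((((r+1):ℕ):ℤ) - i) = ((r:ℤ)+1) * (r.choose i) := by
      have h := congrArg (Nat.cast : ℕ → ℤ) (Nat.choose_mul_succ_eq r i)
      push_cast [hi'] at h
      push_cast
      linarith
    rw [pow_succ]
    push_cast at h1 ⊢
    linear_combination ((-1:ℤ)^i * (((r:ℤ)+1) - i)^m) * h1
  have hB : ∑ i ∈ Finset.range (r+2), (-1:ℤ)^i * (r.choose i) * ((((r+1):ℕ):ℤ) - i)^m
      = Aform m r + Aform m (r+1) := by
    unfold Aform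
    rw [Finset.sum_range_succ' (fun i => (-1:ℤ)^i * (r.choose i) * ((((r+1):ℕ):ℤ) - i)^m) (r+1),
        Finset.sum_range_succ' (fun i => (-1:ℤ)^i * (((r+1).choose i : ℕ):ℤ) * ((((r+1):ℕ):ℤ) - i)^m) (r+1)]
    have hsplit : ∀ i ∈ Finset.range (r+1),
        (-1:ℤ)^(i+1) * (((r+1).choose (i+1) : ℕ):ℤ) * ((((r+1):ℕ):ℤ) - (((i+1):ℕ):ℤ))^m
        = ((-1:ℤ)^(i+1) * (r.choose (i+1)) * ((((r+1):ℕ):ℤ) - (((i+1):ℕ):ℤ))^m)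
          + (-((-1:ℤ)^i * (r.choose i) * ((r:ℤ) - i)^m)) := by
      intro i _
      rw [Nat.choose_succ_succ]
      have hx : (((r+1):ℕ):ℤ) - (((i+1):ℕ):ℤ) = (r:ℤ) - i := by push_cast; ring
      rw [hx]
      push_cast
      ring
    rw [Finset.sum_congr rfl hsplit, Finset.sum_add_distrib]
    rw [Finset.sum_neg_distrib]
    simp only [Nat.choose_zero_right]
    push_cast
    ring
  calc Aform (m+1) (r+1)
      = ∑ i ∈ Finset.range (r+2), ((r:ℤ)+1) * ((-1)^i * (r.choose i) * ((((r+1):ℕ):ℤ) - i)^m) := by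
        unfold Aform; exact Finset.sum_congr rfl key
    _ = ((r:ℤ)+1) * ∑ i ∈ Finset.range (r+2), (-1:ℤ)^i * (r.choose i) * ((((r+1):ℕ):ℤ) - i)^m := by
        rw [Finset.mul_sum]
    _ = ((r:ℤ)+1) * (Aform m r + Aform m (r+1)) := by rw [hB]

lemma stirling_eq : ∀ (m r : ℕ), ((r.factorial * stirling m r : ℕ) : ℤ) = Aform m r := by
  intro m
  induction m with
  | zero =>
    intro r
    cases r with
    | zero => simp [stirling, Aform]
    | succ r =>
      have : Aform 0 (r+1) = 0 := by
        have h := Int.alternating_sum_range_choose (n := r+1)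
        simp only [Nat.succ_ne_zero, if_false] at h
        unfold Aform
        simpa using h
      simp [stirling, this]
  | succ m ih =>
    intro r
    cases r with
    | zero => simp [stirling, Aform]
    | succ r =>
      have hrec : stirling (m+1) (r+1) = stirling m r + (r+1) * stirling m (r+1) := rfl
      rw [hrec, Aform_succ, ← ih r, ← ih (r+1)]
      push_cast [Nat.factorial_succ]
      ring

lemma term_nonneg (m r : ℕ) (q : ℕ) (hq : 1 ≤ q) :
    (0:ℤ) ≤ (r.choose q : ℤ) * ((r:ℤ) - (q:ℤ))^m := by
  rcases le_or_gt q r with h | h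
  · have : (0:ℤ) ≤ (r:ℤ) - q := by
      have : (q:ℤ) ≤ r := by exact_mod_cast h
      linarith
    positivity
  · rw [Nat.choose_eq_zero_of_lt h]; simp

lemma stirling_upper (m r : ℕ)
    (H : ∀ q, 1 ≤ q → ((r.choose (q+1)) : ℤ) * ((r:ℤ) - ((q:ℤ)+1))^m ≤ (r.choose q : ℤ) * ((r:ℤ) - (q:ℤ))^m) :
    ((r.factorial * stirling m r : ℕ) : ℤ) ≤ (r:ℤ)^m := by
  rw [stirling_eq]
  unfold Aform
  rw [Finset.sum_range_succ']
  have he : ∀ i ∈ Finset.range r, (-1:ℤ)^(i+1) * (r.choose (i+1)) * ((r:ℤ) - (((i+1):ℕ):ℤ))^m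
      = -((-1:ℤ)^i * ((r.choose (i+1) : ℤ) * ((r:ℤ) - (((i:ℤ))+1))^m)) := by
    intro i _
    push_cast
    ring
  rw [Finset.sum_congr rfl he, Finset.sum_neg_distrib]
  have halt := alt_nonneg r (fun i => (r.choose (i+1) : ℤ) * ((r:ℤ) - (((i:ℤ))+1))^m)
    (fun i => by
      have := term_nonneg m r (i+1) (by omega)
      push_cast at this ⊢
      convert this using 3 <;> push_cast <;> ring)
    (fun i => by
      have := H (i+1) (by omega)
      push_cast at this ⊢
      convert this using 3 <;> push_cast <;> ring)
  simp only [pow_zero, one_mul, Nat.choose_zero_right, Nat.cast_zero, Nat.cast_one, sub_zero]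
  linarith [halt]

lemma stirling_lower (m r : ℕ) (hr : 2 ≤ r)
    (H : ∀ q, 1 ≤ q → ((r.choose (q+1)) : ℤ) * ((r:ℤ) - ((q:ℤ)+1))^m ≤ (r.choose q : ℤ) * ((r:ℤ) - (q:ℤ))^m) :
    (r:ℤ)^m ≤ ((r.factorial * stirling m r : ℕ) : ℤ) + (r:ℤ) * ((r:ℤ)-1)^m := by
  rw [stirling_eq]
  obtain ⟨r', rfl⟩ : ∃ r', r = r' + 2 := ⟨r - 2, by omega⟩
  unfold Aform
  rw [Finset.sum_range_succ', Finset.sum_range_succ']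
  have he : ∀ i ∈ Finset.range (r'+1),
      (-1:ℤ)^(i+1+1) * ((r'+2).choose (i+1+1)) * ((((r'+2):ℕ):ℤ) - (((i+1+1):ℕ):ℤ))^m
      = (-1:ℤ)^i * (((r'+2).choose (i+2) : ℤ) * ((r':ℤ) - (i:ℤ))^m) := by
    intro i _
    rw [pow_succ, pow_succ]
    push_cast
    ring
  rw [Finset.sum_congr rfl he]
  have halt := alt_nonneg (r'+1) (fun i => ((r'+2).choose (i+2) : ℤ) * ((r':ℤ) - (i:ℤ))^m)
    (fun i => by
      have := term_nonneg m (r'+2) (i+2) (by omega)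
      push_cast at this ⊢
      convert this using 3 <;> push_cast <;> ring)
    (fun i => by
      have := H (i+2) (by omega)
      push_cast at this ⊢
      convert this using 3 <;> push_cast <;> ring)
  norm_num [Nat.choose_one_right]
  linarith [halt]

lemma bern_aux (b : ℕ) (hb : 2 ≤ b) : (2:ℝ) ^ ((1:ℝ)/((b:ℝ)-1)) ≤ (b:ℝ)/((b:ℝ)-1) := by
  have hbR : (2:ℝ) ≤ (b:ℝ) := by exact_mod_cast hb
  have hpos : (0:ℝ) < (b:ℝ) - 1 := by linarith
  have hcast : ((b-1 : ℕ) : ℝ) = (b:ℝ) - 1 := by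
    have : 1 ≤ b := by omega
    push_cast [this]; ring
  have h2 : (2:ℝ) ≤ ((b:ℝ)/((b:ℝ)-1)) ^ (b-1 : ℕ) := by
    have hB := one_add_mul_le_pow (a := 1/((b:ℝ)-1)) (le_trans (by norm_num : (-2:ℝ) ≤ 0) (by positivity)) (b-1)
    have e1 : 1 + ((b-1:ℕ):ℝ) * (1/((b:ℝ)-1)) = 2 := by
      rw [hcast]; field_simp
      norm_num
    have e2 : 1 + 1/((b:ℝ)-1) = (b:ℝ)/((b:ℝ)-1) := by field_simp; ring
    rw [e1, e2] at hB
    exact hB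
  have h3 := Real.rpow_le_rpow (by norm_num : (0:ℝ) ≤ 2) h2 (by positivity : (0:ℝ) ≤ 1/((b:ℝ)-1))
  rw [← Real.rpow_natCast ((b:ℝ)/((b:ℝ)-1)) (b-1), ← Real.rpow_mul (by positivity), hcast,
    mul_one_div_cancel (ne_of_gt hpos), Real.rpow_one] at h3
  exact h3

lemma key_pow (b m : ℕ) (hb : 2 ≤ b) (X : ℝ) (hX : 0 < X)
    (h : ((b:ℝ)-1) * Real.logb 2 X < (m:ℝ)) :
    X * ((b:ℝ)-1)^m < (b:ℝ)^m := by
  have hbR : (2:ℝ) ≤ (b:ℝ) := by exact_mod_cast hb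
  have hpos : (0:ℝ) < (b:ℝ) - 1 := by linarith
  have h1 : X < (2:ℝ) ^ ((m:ℝ)/((b:ℝ)-1)) := by
    rw [← Real.rpow_logb (by norm_num : (0:ℝ) < 2) (by norm_num) hX]
    rw [Real.rpow_lt_rpow_left_iff (by norm_num : (1:ℝ) < 2)]
    rw [lt_div_iff₀ hpos]
    linarith [h]
  have h2 : (2:ℝ) ^ ((m:ℝ)/((b:ℝ)-1)) ≤ ((b:ℝ)/((b:ℝ)-1))^m := by
    calc (2:ℝ) ^ ((m:ℝ)/((b:ℝ)-1)) = ((2:ℝ) ^ ((1:ℝ)/((b:ℝ)-1)))^(m:ℕ) := by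
          rw [← Real.rpow_natCast ((2:ℝ) ^ ((1:ℝ)/((b:ℝ)-1))) m, ← Real.rpow_mul (by norm_num)]
          congr 1
          ring
      _ ≤ ((b:ℝ)/((b:ℝ)-1))^m := pow_le_pow_left₀ (by positivity) (bern_aux b hb) m
  have h3 : X < ((b:ℝ)/((b:ℝ)-1))^m := lt_of_lt_of_le h1 h2
  calc X * ((b:ℝ)-1)^m < ((b:ℝ)/((b:ℝ)-1))^m * ((b:ℝ)-1)^m :=
        mul_lt_mul_of_pos_right h3 (pow_pos hpos m)
    _ = (b:ℝ)^m := by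
        rw [div_pow, div_mul_cancel₀]
        positivity

theorem stmt_10 (n j k t s : ℕ) (hjk : k ≤ j) (hkt : t + 2 ≤ k)
    (hs : s ≤ k - t - 2) (hn : (n : ℝ) ≥ 2 * Lfun j t - t - 2) :
    stirling (n - t - s) (k - t - s) >
      (t + 1) ^ 2 * (j - t + 1) ^ 2 * stirling (n - t - s - 1) (k - t - s - 1) := by
  have hjt : t + 2 ≤ j := le_trans hkt hjk
  set C : ℕ := (t+1) * (j - t + 1) with hCdef
  have hCcast : (C:ℝ) = ((t:ℝ)+1) * ((j:ℝ) - t + 1) := by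
    rw [hCdef]
    have h1 : t ≤ j := by omega
    push_cast [h1]
    ring
  have hC3 : 3 ≤ C := by
    have h1 : 3 ≤ j - t + 1 := by omega
    calc 3 = 1 * 3 := by norm_num
      _ ≤ (t+1) * (j - t + 1) := Nat.mul_le_mul (by omega) h1
  have hCr3 : (3:ℝ) ≤ (C:ℝ) := by exact_mod_cast hC3
  have hCpos : (0:ℝ) < C := by linarith
  have hlogC : (3/2 : ℝ) ≤ Real.logb 2 C := by
    rw [Real.le_logb_iff_rpow_le (by norm_num : (1:ℝ) < 2) (by linarith)]
    have h8 : ((2:ℝ) ^ ((3:ℝ)/2))^(2:ℕ) = 8 := by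
      rw [← Real.rpow_natCast ((2:ℝ) ^ ((3:ℝ)/2)) 2, ← Real.rpow_mul (by norm_num)]
      norm_num
    nlinarith [h8, hCr3, Real.rpow_nonneg (by norm_num : (0:ℝ) ≤ 2) ((3:ℝ)/2)]
  have hn' : (n:ℝ) ≥ (t:ℝ) + 2*((j:ℝ)-t+1) * Real.logb 2 (C:ℝ) := by
    have hL : 2 * Lfun j t - t - 2 = (t:ℝ) + 2*((j:ℝ)-t+1) * Real.logb 2 (((t:ℝ)+1)*((j:ℝ)-t+1)) := by
      unfold Lfun; ring
    rw [hL] at hn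
    rw [hCcast]
    exact hn
  have hkR : (k:ℝ) ≤ (j:ℝ) := by exact_mod_cast hjk
  have hstk : s + t + 2 ≤ k := by omega
  have hstkR : (s:ℝ) + t + 2 ≤ (k:ℝ) := by exact_mod_cast hstk
  have hlog0 : (0:ℝ) ≤ Real.logb 2 C := by linarith
  have hnk : (k:ℝ) + 2*(s:ℝ) + 7 ≤ (n:ℝ) := by
    have e1 : 2*((k:ℝ)-t+1) * Real.logb 2 (C:ℝ) ≤ 2*((j:ℝ)-t+1) * Real.logb 2 (C:ℝ) := by
      apply mul_le_mul_of_nonneg_right _ hlog0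
      linarith
    have e2 : 2*((k:ℝ)-t+1) * (3/2) ≤ 2*((k:ℝ)-t+1) * Real.logb 2 (C:ℝ) := by
      apply mul_le_mul_of_nonneg_left hlogC
      linarith
    linarith [hn', e1, e2, hstkR]
  have hnkN : k + 2*s + 7 ≤ n := by exact_mod_cast hnk
  set a := n - t - s with hadef
  set b := k - t - s with hbdef
  have hb2 : 2 ≤ b := by omega
  have hab : b + s + 7 ≤ a := by omega
  have hbCn : b ≤ C := by
    have h1 : b ≤ j - t + 1 := by omega
    have h2 : j - t + 1 ≤ C := by
      rw [hCdef]; exact Nat.le_mul_of_pos_left _ (by omega)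
    omega
  have hbCr : (b:ℝ) ≤ (C:ℝ) := by exact_mod_cast hbCn
  have hbRge : (2:ℝ) ≤ (b:ℝ) := by exact_mod_cast hb2
  have haR : (a:ℝ) = (n:ℝ) - t - s := by
    rw [hadef]
    have ht : t ≤ n := by omega
    have hs' : s ≤ n - t := by omega
    rw [Nat.cast_sub hs', Nat.cast_sub ht]
  have hbR : (b:ℝ) = (k:ℝ) - t - s := by
    rw [hbdef]
    have ht : t ≤ k := by omega
    have hs' : s ≤ k - t := by omega
    rw [Nat.cast_sub hs', Nat.cast_sub ht]
  have hM : (t + 1) ^ 2 * (j - t + 1) ^ 2 = C^2 := by rw [hCdef]; ring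
  rw [hM]
  set X : ℝ := ((C:ℝ))^2 + (b:ℝ) - 1 with hXdef
  have hXpos : (0:ℝ) < X := by rw [hXdef]; nlinarith [hCr3, hbRge]
  have hKEY : ((b:ℝ)-1) * Real.logb 2 X < (a:ℝ) - 1 := by
    have hlog2pos : (0:ℝ) < Real.log 2 := Real.log_pos (by norm_num)
    have hXle : X ≤ (C:ℝ)^2 * (1 + 1/(C:ℝ)) := by
      have e : (C:ℝ)^2 * (1 + 1/(C:ℝ)) = (C:ℝ)^2 + C := by field_simp
      rw [hXdef, e]
      linarith [hbCr]
    have hlogX : Real.logb 2 X ≤ 2 * Real.logb 2 (C:ℝ) + (1/(C:ℝ))/Real.log 2 := by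
      have h1 : Real.logb 2 X ≤ Real.logb 2 ((C:ℝ)^2 * (1 + 1/(C:ℝ))) :=
        Real.logb_le_logb_of_le (by norm_num) hXpos hXle
      have h2 : Real.logb 2 ((C:ℝ)^2 * (1 + 1/(C:ℝ)))
          = 2 * Real.logb 2 (C:ℝ) + Real.logb 2 (1 + 1/(C:ℝ)) := by
        rw [Real.logb_mul (by positivity) (by positivity), Real.logb_pow]
        push_cast
        ring
      have h4 : Real.log (1 + 1/(C:ℝ)) ≤ 1/(C:ℝ) := by
        have := Real.log_le_sub_one_of_pos (show (0:ℝ) < 1 + 1/(C:ℝ) by positivity)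
        linarith
      have h3 : Real.logb 2 (1 + 1/(C:ℝ)) ≤ (1/(C:ℝ))/Real.log 2 := by
        rw [Real.logb]
        exact div_le_div_of_nonneg_right h4 hlog2pos.le
      linarith [h1, h2.le, h3]
    have hb1C : (b:ℝ) - 1 ≤ (C:ℝ) := by linarith
    have hd1 : ((b:ℝ)-1) * ((1/(C:ℝ))/Real.log 2) ≤ 3/2 := by
      have h5 : ((b:ℝ)-1) * ((1/(C:ℝ))/Real.log 2) ≤ (C:ℝ) * ((1/(C:ℝ))/Real.log 2) :=
        mul_le_mul_of_nonneg_right hb1C (by positivity)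
      have h6 : (C:ℝ) * ((1/(C:ℝ))/Real.log 2) = 1/Real.log 2 := by
        field_simp
      have h7 : 1/Real.log 2 ≤ 3/2 := by
        rw [div_le_iff₀ hlog2pos]
        linarith [Real.log_two_gt_d9]
      linarith
    have hmul1 : ((b:ℝ)-1) * Real.logb 2 X
        ≤ 2*(((b:ℝ)-1) * Real.logb 2 (C:ℝ)) + ((b:ℝ)-1) * ((1/(C:ℝ))/Real.log 2) := by
      calc ((b:ℝ)-1) * Real.logb 2 X
          ≤ ((b:ℝ)-1) * (2 * Real.logb 2 (C:ℝ) + (1/(C:ℝ))/Real.log 2) :=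
            mul_le_mul_of_nonneg_left hlogX (by linarith)
        _ = 2*(((b:ℝ)-1) * Real.logb 2 (C:ℝ)) + ((b:ℝ)-1) * ((1/(C:ℝ))/Real.log 2) := by ring
    have hUb : ((j:ℝ) - t + 1) - ((b:ℝ) - 1) ≥ (s:ℝ) + 2 := by
      rw [hbR]; linarith [hkR]
    have hmul2 : 2 * (3/2) * ((s:ℝ)+2) ≤ 2 * Real.logb 2 (C:ℝ) * (((j:ℝ)-t+1) - ((b:ℝ)-1)) := by
      apply mul_le_mul (by linarith) hUb (by positivity) (by linarith)
    have hmul2' : 3*(s:ℝ) + 6 + 2*(((b:ℝ)-1) * Real.logb 2 (C:ℝ))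
        ≤ 2*(((j:ℝ)-t+1) * Real.logb 2 (C:ℝ)) := by nlinarith [hmul2]
    rw [haR]
    have hsR : (0:ℝ) ≤ (s:ℝ) := by positivity
    linarith [hmul1, hmul2', hd1, hn', hsR]
  have hdm : ∀ (m : ℕ), (a:ℝ) - 1 ≤ (m:ℝ) → ∀ d : ℕ, 2 ≤ d → d ≤ b →
      (d:ℝ)*((d:ℝ)-1)^m ≤ 2*(d:ℝ)^m := by
    intro m hm d hd2 hdb
    have hdR : (2:ℝ) ≤ (d:ℝ) := by exact_mod_cast hd2
    have hdbR : (d:ℝ) ≤ (b:ℝ) := by exact_mod_cast hdb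
    have harg : ((d:ℝ)-1) * Real.logb 2 ((d:ℝ)/2) < (m:ℝ) := by
      have hX3 : (d:ℝ)/2 ≤ X := by rw [hXdef]; nlinarith [hCr3, hbCr]
      have hlogd : Real.logb 2 ((d:ℝ)/2) ≤ Real.logb 2 X :=
        Real.logb_le_logb_of_le (by norm_num) (by positivity) hX3
      have hlogd0 : 0 ≤ Real.logb 2 ((d:ℝ)/2) := Real.logb_nonneg (by norm_num) (by linarith)
      have hmm : ((d:ℝ)-1) * Real.logb 2 ((d:ℝ)/2) ≤ ((b:ℝ)-1) * Real.logb 2 X :=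
        mul_le_mul (by linarith) hlogd hlogd0 (by linarith)
      linarith [hKEY, hm]
    have h := key_pow d m hd2 ((d:ℝ)/2) (by positivity) harg
    linarith [h]
  have Hfor : ∀ (rr m : ℕ), 1 ≤ m → rr ≤ b → (a:ℝ) - 1 ≤ (m:ℝ) → ∀ q, 1 ≤ q →
      ((rr.choose (q+1)) : ℤ) * ((rr:ℤ) - ((q:ℤ)+1))^m ≤ (rr.choose q : ℤ) * ((rr:ℤ) - (q:ℤ))^m := by
    intro rr m hm1 hrb hma q hq
    rcases lt_or_ge q rr with hqr | hqr
    · have hd1 : 1 ≤ rr - q := by omega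
      have hcast1 : (rr:ℤ) - ((q:ℤ)+1) = (((rr - q) - 1 : ℕ) : ℤ) := by push_cast; omega
      have hcast2 : (rr:ℤ) - (q:ℤ) = (((rr - q):ℕ):ℤ) := by push_cast; omega
      rw [hcast1, hcast2]
      have hN : rr.choose (q+1) * ((rr - q)-1)^m ≤ rr.choose q * (rr - q)^m := by
        rcases eq_or_lt_of_le hd1 with h1 | h2
        · have hz : (rr - q) - 1 = 0 := by omega
          rw [hz, zero_pow (by omega : m ≠ 0), Nat.mul_zero]
          exact Nat.zero_le _
        · have hkey : (rr - q) * ((rr - q)-1)^m ≤ 2 * (rr - q)^m := by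
            have hR := hdm m hma (rr - q) (by omega) (by omega)
            have hc : (((rr - q)-1:ℕ):ℝ) = ((rr - q : ℕ):ℝ) - 1 := by
              push_cast [hd1]; ring
            rw [← hc] at hR
            exact_mod_cast hR
          have hcr := Nat.choose_succ_right_eq rr q
          apply Nat.le_of_mul_le_mul_left _ (show 0 < q+1 by omega)
          calc (q+1) * (rr.choose (q+1) * ((rr - q)-1)^m)
              = (rr.choose (q+1) * (q+1)) * ((rr - q)-1)^m := by ring
            _ = (rr.choose q * (rr - q)) * ((rr - q)-1)^m := by rw [hcr]
            _ = rr.choose q * ((rr - q) * ((rr - q)-1)^m) := by ring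
            _ ≤ rr.choose q * (2 * (rr - q)^m) := Nat.mul_le_mul_left _ hkey
            _ = 2 * (rr.choose q * (rr - q)^m) := by ring
            _ ≤ (q+1) * (rr.choose q * (rr - q)^m) := Nat.mul_le_mul_right _ (by omega)
      exact_mod_cast hN
    · rw [Nat.choose_eq_zero_of_lt (show rr < q+1 by omega)]
      simp only [Nat.cast_zero, zero_mul]
      rcases lt_or_ge rr q with h | h
      · rw [Nat.choose_eq_zero_of_lt h]; simp
      · have hqe : q = rr := le_antisymm h hqr
        subst hqe
        rw [sub_self, zero_pow (by omega : m ≠ 0), mul_zero]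
  have haR1 : ((a-1 : ℕ):ℝ) = (a:ℝ) - 1 := by
    push_cast [show 1 ≤ a by omega]
    ring
  have Hb := Hfor b a (by omega) le_rfl (by linarith)
  have Hb1 := Hfor (b-1) (a-1) (by omega) (by omega) (le_of_eq haR1.symm)
  have hup := stirling_upper (a-1) (b-1) Hb1
  have hlow := stirling_lower a b hb2 Hb
  have hkeyR : X * ((b:ℝ)-1)^(a-1) < (b:ℝ)^(a-1) :=
    key_pow b (a-1) hb2 X hXpos (by rw [haR1]; exact hKEY)
  have hkeyZ : ((C:ℤ)^2 + (b:ℤ) - 1) * ((b:ℤ)-1)^(a-1) < (b:ℤ)^(a-1) := by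
    rw [hXdef] at hkeyR
    exact_mod_cast hkeyR
  have hcastb1 : ((b-1:ℕ):ℤ) = (b:ℤ) - 1 := by
    push_cast [show 1 ≤ b by omega]
    ring
  have hfac : (b.factorial : ℤ) = (b:ℤ) * ((b-1).factorial : ℤ) := by
    exact_mod_cast congrArg (Nat.cast (R := ℤ)) (Nat.mul_factorial_pred (show b ≠ 0 by omega)).symm
  rw [hcastb1] at hup
  push_cast at hup hlow
  have hBpos : (0:ℤ) < (b:ℤ) := by positivity
  have hCS : (0:ℤ) ≤ (C:ℤ)^2 * (b:ℤ) := by positivity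
  have h3 : (C:ℤ)^2 * (b:ℤ) * (((b-1).factorial:ℤ) * (stirling (a-1) (b-1) : ℤ))
      ≤ (C:ℤ)^2 * (b:ℤ) * ((b:ℤ)-1)^(a-1) := mul_le_mul_of_nonneg_left hup hCS
  have h4 := mul_lt_mul_of_pos_left hkeyZ hBpos
  have hpow : ((b:ℤ)-1)^a = ((b:ℤ)-1)^(a-1) * ((b:ℤ)-1) := by
    conv_lhs => rw [show a = (a-1)+1 by omega]
    rw [pow_succ]
  have h2 : (b:ℤ)^a = (b:ℤ)^(a-1) * b := by
    conv_lhs => rw [show a = (a-1)+1 by omega]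
    rw [pow_succ]
  rw [hpow, h2] at hlow
  have hZ : ((b.factorial : ℕ):ℤ) * ((C:ℤ)^2 * (stirling (a-1) (b-1) : ℤ))
      < ((b.factorial : ℕ):ℤ) * (stirling a b : ℤ) := by
    rw [hfac]
    nlinarith [h3, h4, hlow]
  have hZ' : (C:ℤ)^2 * (stirling (a-1) (b-1) : ℤ) < (stirling a b : ℤ) :=
    lt_of_mul_lt_mul_left hZ (by positivity)
  exact_mod_cast hZ'
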